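/- Let f, h ∈ k[[u]] be nonzero power series, let v(f), v(h) be their u-adic orders and f_ℓ, h_m their lowest coefficients (the coefficients in degrees v(f), v(h)). Then there exists a nonzero g ∈ k[[u]] with f·g = g^p·h if and only if v(f) ≥ v(h), v(f) ≡ v(h) (mod p−1), and there exists x ∈ k, x ≠ 0, with x^{p−1}·h_m = f_ℓ. Moreover, if f and h are units of k[[u]], then every nonzero solution g is a unit of k[[u]]. -/

import Mathlib

open PowerSeries

section CyclicAux

variable {k : Type*} [Field k]

lemma smodXPow_aux {n : ℕ} (a b : PowerSeries k) :
    a ≡ b [SMOD ((Ideal.span {(X : PowerSeries k)}) ^ n • ⊤ :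
      Submodule (PowerSeries k) (PowerSeries k))] ↔ ∀ i < n, coeff i a = coeff i b := by
  rw [SModEq.sub_mem, smul_eq_mul, Ideal.mul_top, Ideal.span_singleton_pow,
    Ideal.mem_span_singleton, X_pow_dvd_iff]
  exact forall₂_congr fun i _ => by rw [map_sub, sub_eq_zero]

instance psAdicComplete_aux :
    IsAdicComplete (Ideal.span {(X : PowerSeries k)}) (PowerSeries k) where
  haus' x hx := by
    ext i
    have := (smodXPow_aux x 0).mp (hx (i + 1)) i (Nat.lt_succ_self i)
    simpa using this
  prec' f hf := by
    refine ⟨PowerSeries.mk fun n => coeff n (f (n + 1)), fun n => ?_⟩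
    rw [smodXPow_aux]
    intro i hi
    have h1 : ∀ j < (i + 1), coeff j (f (i + 1)) = coeff j (f n) :=
      (smodXPow_aux _ _).mp (hf (Nat.succ_le_of_lt hi))
    rw [coeff_mk]
    exact (h1 i (Nat.lt_succ_self i)).symm

lemma exists_unit_nth_root_aux (p : ℕ) (hp : p.Prime) [CharP k p]
    (U : PowerSeries k) (x : k) (hx : x ≠ 0)
    (hc : x ^ (p - 1) = constantCoeff U) :
    ∃ G : PowerSeries k, IsUnit G ∧ G ^ (p - 1) = U := by
  set I : Ideal (PowerSeries k) := Ideal.span {(X : PowerSeries k)}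
  have hmonic : (Polynomial.X ^ (p - 1) - Polynomial.C U).Monic :=
    Polynomial.monic_X_pow_sub_C U (Nat.sub_ne_zero_of_lt hp.one_lt)
  have heval : (Polynomial.X ^ (p - 1) - Polynomial.C U).eval (PowerSeries.C x) ∈ I := by
    rw [Ideal.mem_span_singleton, X_dvd_iff]
    simp [← map_pow, hc]
  have hne : ((p - 1 : ℕ) : k) * x ^ (p - 2) ≠ 0 := by
    have h1 : ((p - 1 : ℕ) : k) = -1 := by
      rw [Nat.cast_sub hp.one_le, CharP.cast_eq_zero k p]; ring
    rw [h1]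
    simpa using pow_ne_zero _ hx
  have hder : IsUnit (Ideal.Quotient.mk I
      ((Polynomial.X ^ (p - 1) - Polynomial.C U).derivative.eval (PowerSeries.C x))) := by
    have : (Polynomial.X ^ (p - 1) - Polynomial.C U).derivative.eval (PowerSeries.C x)
        = PowerSeries.C (((p - 1 : ℕ) : k) * x ^ (p - 2)) := by
      rw [Polynomial.derivative_sub, Polynomial.derivative_C, sub_zero,
        Polynomial.derivative_X_pow, Polynomial.eval_mul, Polynomial.eval_pow,
        Polynomial.eval_C, Polynomial.eval_X, ← map_pow,
        ← map_natCast (PowerSeries.C) (p - 1), ← map_mul, Nat.sub_sub]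
    rw [this]
    refine IsUnit.of_mul_eq_one (Ideal.Quotient.mk I
      (PowerSeries.C ((((p - 1 : ℕ) : k) * x ^ (p - 2)))⁻¹)) ?_
    rw [← map_mul, ← map_mul, mul_inv_cancel₀ hne, map_one, map_one]
  obtain ⟨a, ha, hax⟩ := HenselianRing.is_henselian (I := I)
    (Polynomial.X ^ (p - 1) - Polynomial.C U) hmonic (PowerSeries.C x) heval hder
  refine ⟨a, ?_, ?_⟩
  · rw [isUnit_iff_constantCoeff]
    rw [Ideal.mem_span_singleton, X_dvd_iff, map_sub, sub_eq_zero] at hax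
    rw [hax]
    simpa using hx.isUnit
  · have := ha
    simp only [Polynomial.IsRoot, Polynomial.eval_sub, Polynomial.eval_pow,
      Polynomial.eval_X, Polynomial.eval_C, sub_eq_zero] at this
    exact this

lemma decomp_aux {φ : PowerSeries k} {v : ℕ}
    (hv : coeff v φ ≠ 0 ∧ ∀ i < v, coeff i φ = 0) :
    ∃ Φ : PowerSeries k, φ = X ^ v * Φ ∧ constantCoeff Φ = coeff v φ := by
  obtain ⟨Φ, hΦ⟩ := X_pow_dvd_iff.mpr hv.2
  refine ⟨Φ, hΦ, ?_⟩
  have h0 := coeff_X_pow_mul Φ v 0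
  rw [zero_add, ← hΦ, coeff_zero_eq_constantCoeff_apply] at h0
  exact h0.symm

lemma exp_eq_aux {a b : ℕ} {A B : PowerSeries k}
    (hA : constantCoeff A ≠ 0) (hB : constantCoeff B ≠ 0)
    (hEq : (X : PowerSeries k) ^ a * A = X ^ b * B) : a = b ∧ A = B := by
  have hOA : order A = (0 : ℕ) := order_eq_nat.mpr
    ⟨by rwa [coeff_zero_eq_constantCoeff_apply], fun i hi => absurd hi (Nat.not_lt_zero i)⟩
  have hOB : order B = (0 : ℕ) := order_eq_nat.mpr
    ⟨by rwa [coeff_zero_eq_constantCoeff_apply], fun i hi => absurd hi (Nat.not_lt_zero i)⟩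
  have hord := congrArg order hEq
  rw [order_mul, order_mul, order_X_pow, order_X_pow, hOA, hOB] at hord
  have hab : a = b := by exact_mod_cast hord
  subst hab
  refine ⟨rfl, mul_left_cancel₀ (pow_ne_zero a X_ne_zero) hEq⟩

end CyclicAux

theorem cyclic_semilinear_solution_iff
    (p : ℕ) (hp : p.Prime) (k : Type*) [Field k] [CharP k p]
    (f h : PowerSeries k) (hf : f ≠ 0) (hh : h ≠ 0)
    (vf vh : ℕ)
    (hvf : coeff vf f ≠ 0 ∧ ∀ i < vf, coeff i f = 0)
    (hvh : coeff vh h ≠ 0 ∧ ∀ i < vh, coeff i h = 0) :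
    ((∃ g : PowerSeries k, g ≠ 0 ∧ f * g = g ^ p * h) ↔
      (vh ≤ vf ∧ vf ≡ vh [MOD p - 1] ∧
        ∃ x : k, x ≠ 0 ∧ x ^ (p - 1) * coeff vh h = coeff vf f)) ∧
    (IsUnit f → IsUnit h →
      ∀ g : PowerSeries k, g ≠ 0 → f * g = g ^ p * h → IsUnit g) := by
  classical
  obtain ⟨F, hFeq, hF0⟩ := decomp_aux hvf
  obtain ⟨H, hHeq, hH0⟩ := decomp_aux hvh
  have hF0ne : constantCoeff F ≠ 0 := by rw [hF0]; exact hvf.1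
  have hH0ne : constantCoeff H ≠ 0 := by rw [hH0]; exact hvh.1
  have hpw : ∀ w : ℕ, p * w = (p - 1) * w + w := by
    intro w
    have h1 := Nat.sub_one_mul p w
    have h2 : w ≤ p * w := Nat.le_mul_of_pos_left w hp.pos
    omega
  -- key analysis of any nonzero solution
  have key : ∀ g : PowerSeries k, g ≠ 0 → f * g = g ^ p * h →
      ∃ w G, g = X ^ w * G ∧ constantCoeff G ≠ 0 ∧ vf + w = p * w + vh ∧
        F * G = G ^ p * H := by
    intro g hg heq
    have hex : ∃ n, coeff n g ≠ 0 := by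
      by_contra hcon
      push_neg at hcon
      exact hg (PowerSeries.ext fun n => by simpa using hcon n)
    obtain ⟨G, hGeq, hG0⟩ := decomp_aux (φ := g) (v := Nat.find hex)
      ⟨Nat.find_spec hex, fun i hi => by
        by_contra hc; exact Nat.find_min hex hi hc⟩
    have hG0ne : constantCoeff G ≠ 0 := by
      rw [hG0]; exact Nat.find_spec hex
    rw [hFeq, hHeq, hGeq] at heq
    set w := Nat.find hex with hwdef
    have heq2 : (X : PowerSeries k) ^ (vf + w) * (F * G)
        = X ^ (p * w + vh) * (G ^ p * H) := by
      calc (X : PowerSeries k) ^ (vf + w) * (F * G)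
          = (X ^ vf * F) * (X ^ w * G) := by rw [pow_add]; ring
        _ = (X ^ w * G) ^ p * (X ^ vh * H) := heq
        _ = X ^ (p * w + vh) * (G ^ p * H) := by
            rw [mul_pow, ← pow_mul, pow_add, mul_comm w p]; ring
    obtain ⟨hab, hAB⟩ := exp_eq_aux (by simp [map_mul, hF0ne, hG0ne])
      (by simp [map_mul, map_pow, hH0ne, pow_ne_zero, hG0ne]) heq2
    exact ⟨w, G, hGeq, hG0ne, hab, hAB⟩
  have hppow : ∀ a : k, a ^ p = a ^ (p - 1) * a := by
    intro a
    have h1 := pow_succ a (p - 1)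
    rw [Nat.sub_add_cancel hp.one_le] at h1
    exact h1
  constructor
  · constructor
    · rintro ⟨g, hg, heq⟩
      obtain ⟨w, G, hGeq, hG0ne, hord, hFG⟩ := key g hg heq
      have hord' : vf = vh + (p - 1) * w := by
        have := hpw w; omega
      have hle : vh ≤ vf := by omega
      refine ⟨hle, ?_, constantCoeff G, hG0ne, ?_⟩
      · exact ((Nat.modEq_iff_dvd' hle).mpr ⟨w, by omega⟩).symm
      · have h0 := congrArg (constantCoeff) hFG
        rw [map_mul, map_mul, map_pow] at h0
        rw [hF0, hH0] at h0
        rw [hppow (constantCoeff G)] at h0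
        have h1 : coeff vf f * constantCoeff G
            = ((constantCoeff G) ^ (p - 1) * coeff vh h) * constantCoeff G := by
          rw [h0]; ring
        exact (mul_right_cancel₀ hG0ne h1).symm
    · rintro ⟨hle, hmod, x, hx, hxrel⟩
      obtain ⟨w, hw⟩ := (Nat.modEq_iff_dvd' hle).mp hmod.symm
      set U : PowerSeries k := F * H⁻¹ with hU
      have hcU : x ^ (p - 1) = constantCoeff U := by
        rw [hU, map_mul, PowerSeries.constantCoeff_inv, hF0, hH0, ← hxrel,
          mul_assoc, mul_inv_cancel₀ hvh.1, mul_one]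
      obtain ⟨G, hGu, hGp⟩ := exists_unit_nth_root_aux p hp U x hx hcU
      have hG0ne : constantCoeff G ≠ 0 := by
        have := isUnit_iff_constantCoeff.mp hGu
        exact this.ne_zero
      have hppowG : G ^ p = G ^ (p - 1) * G := by
        have h1 := pow_succ G (p - 1)
        rw [Nat.sub_add_cancel hp.one_le] at h1
        exact h1
      have hFG : F * G = G ^ p * H := by
        rw [hppowG, hGp, hU]
        calc F * G = F * G * (H⁻¹ * H) := by
              rw [PowerSeries.inv_mul_cancel H hH0ne, mul_one]
          _ = F * H⁻¹ * G * H := by ring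
      refine ⟨X ^ w * G, mul_ne_zero (pow_ne_zero w X_ne_zero) hGu.ne_zero, ?_⟩
      have hexp : vf + w = p * w + vh := by
        have := hpw w; omega
      rw [hFeq, hHeq]
      calc (X ^ vf * F) * (X ^ w * G)
          = (X : PowerSeries k) ^ (vf + w) * (F * G) := by rw [pow_add]; ring
        _ = X ^ (p * w + vh) * (G ^ p * H) := by rw [hexp, hFG]
        _ = (X ^ w * G) ^ p * (X ^ vh * H) := by
            rw [mul_pow, ← pow_mul, pow_add, mul_comm w p]; ring
  · intro huf huh g hg heq
    have hvf0 : vf = 0 := by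
      by_contra hv
      have := hvf.2 0 (Nat.pos_of_ne_zero hv)
      rw [coeff_zero_eq_constantCoeff_apply] at this
      exact ((isUnit_iff_constantCoeff.mp huf).ne_zero) this
    have hvh0 : vh = 0 := by
      by_contra hv
      have := hvh.2 0 (Nat.pos_of_ne_zero hv)
      rw [coeff_zero_eq_constantCoeff_apply] at this
      exact ((isUnit_iff_constantCoeff.mp huh).ne_zero) this
    obtain ⟨w, G, hGeq, hG0ne, hord, -⟩ := key g hg heq
    have hw0 : w = 0 := by
      have h2 : 2 * w ≤ p * w := Nat.mul_le_mul_right w hp.two_le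
      omega
    rw [hGeq, hw0, pow_zero, one_mul]
    exact isUnit_iff_constantCoeff.mpr hG0ne.isUnit
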